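/- Let T be a finite horizon, (𝓕_t)_{t≤T} a filtration, and for each t let K̄_t be an 𝓕_t-measurable closed convex cone in ℝ² containing ℝ₊² with K̄_t + K̄_t ⊆ K̄_t. Define R̄⁰_T = Σ_{t=0}^T L⁰(−K̄_t, 𝓕_t). Then the condition (a) 'R̄⁰_T ∩ L⁰(K̄_t, 𝓕_t) = {0} for every t = 0,…,T' is equivalent to (b) 'whenever Σ_{i=0}^T ξ_i = 0 with ξ_i ∈ L⁰(K̄_i, 𝓕_i), then all ξ_i = 0', assuming each K̄_t is a proper cone (K̄_t ∩ (−K̄_t) = {0}). -/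

import Mathlib

open MeasureTheory Finset Pointwise

/-- `f` is an `F`-measurable random variable with values in `A ω` a.s. -/
def MemL0 {Ω : Type*} [MeasurableSpace Ω] (μ : Measure Ω) (F : MeasurableSpace Ω)
    (A : Ω → Set (ℝ × ℝ)) (f : Ω → ℝ × ℝ) : Prop :=
  @Measurable Ω (ℝ × ℝ) F _ f ∧ ∀ᵐ ω ∂μ, f ω ∈ A ω

/-- `f` is an attainable claim at horizon `T` from zero endowment:
`f = ∑_{t ≤ T} ξ_t` with `ξ_t ∈ L⁰(−K̄_t, 𝓕_t)`. -/
def Attainable {Ω : Type*} [MeasurableSpace Ω] (μ : Measure Ω)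
    (F : ℕ → MeasurableSpace Ω) (K : ℕ → Ω → Set (ℝ × ℝ)) (T : ℕ)
    (f : Ω → ℝ × ℝ) : Prop :=
  ∃ ξ : ℕ → Ω → ℝ × ℝ,
    (∀ t ≤ T, MemL0 μ (F t) (fun ω => -(K t ω)) (ξ t)) ∧
    ∀ ω, f ω = ∑ t ∈ Finset.range (T + 1), ξ t ω

theorem noArbitrage_tA1_iff_sum_zero
    {Ω : Type*} [MeasurableSpace Ω] (μ : Measure Ω) [IsProbabilityMeasure μ]
    (F : ℕ → MeasurableSpace Ω) (hFle : ∀ t, F t ≤ ‹MeasurableSpace Ω›)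
    (hFmono : Monotone F)
    (K : ℕ → Ω → Set (ℝ × ℝ)) (T : ℕ)
    (hclosed : ∀ t ω, IsClosed (K t ω))
    (hconvex : ∀ t ω, Convex ℝ (K t ω))
    (hcone : ∀ t ω, ∀ c : ℝ, 0 ≤ c → ∀ p ∈ K t ω, c • p ∈ K t ω)
    (hpos : ∀ t ω, {p : ℝ × ℝ | 0 ≤ p.1 ∧ 0 ≤ p.2} ⊆ K t ω)
    (hadd : ∀ t ω, K t ω + K t ω ⊆ K t ω)
    (hproper : ∀ t ω, K t ω ∩ -(K t ω) = {0}) :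
    (∀ t ≤ T, ∀ f : Ω → ℝ × ℝ, Attainable μ F K T f →
        MemL0 μ (F t) (K t) f → f =ᵐ[μ] 0) ↔
    (∀ ξ : ℕ → Ω → ℝ × ℝ, (∀ i ≤ T, MemL0 μ (F i) (K i) (ξ i)) →
        (∀ᵐ ω ∂μ, ∑ i ∈ Finset.range (T + 1), ξ i ω = 0) →
        ∀ i ≤ T, ξ i =ᵐ[μ] 0) := by
  have hzeroK : ∀ t ω, (0 : ℝ × ℝ) ∈ K t ω := fun t ω => hpos t ω ⟨le_rfl, le_rfl⟩
  constructor
  · intro hA ξ hξ hsum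
    have step : ∀ t, t ≤ T → (∀ j, t < j → j ≤ T → ξ j =ᵐ[μ] 0) → ξ t =ᵐ[μ] 0 := by
      intro t ht hzero
      set f : Ω → ℝ × ℝ := fun ω => -∑ i ∈ Finset.range t, ξ i ω with hfdef
      have h2 : ∀ᵐ ω ∂μ, ∀ j ∈ Finset.Ioc t T, ξ j ω = 0 := by
        rw [Filter.eventually_all_finset]
        intro j hj
        exact hzero j (Finset.mem_Ioc.mp hj).1 (Finset.mem_Ioc.mp hj).2
      have hfeq : ∀ᵐ ω ∂μ, f ω = ξ t ω := by
        filter_upwards [hsum, h2] with ω h1 h3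
        have hsub : ∑ i ∈ Finset.range (t + 1), ξ i ω
            = ∑ i ∈ Finset.range (T + 1), ξ i ω := by
          apply Finset.sum_subset
          · exact Finset.range_subset_range.mpr (by omega)
          · intro i hi hni
            simp only [Finset.mem_range] at hi hni
            exact h3 i (Finset.mem_Ioc.mpr ⟨by omega, by omega⟩)
        rw [Finset.sum_range_succ] at hsub
        rw [h1] at hsub
        have : ∑ i ∈ Finset.range t, ξ i ω = -ξ t ω := by
          have := hsub
          linear_combination (norm := module) this
        simp [hfdef, this]
      have hfattain : Attainable μ F K T f := by
        refine ⟨fun i ω => if i < t then -ξ i ω else 0, fun i hiT => ?_, fun ω => ?_⟩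
        · by_cases hit : i < t
          · refine ⟨?_, ?_⟩
            · simp only [hit, if_true]
              exact (hξ i hiT).1.neg
            · filter_upwards [(hξ i hiT).2] with ω hω
              simp only [hit, if_true]
              exact Set.neg_mem_neg.mpr hω
          · refine ⟨?_, ?_⟩
            · simpa [hit] using @measurable_const (ℝ × ℝ) Ω _ (F i) 0
            · filter_upwards with ω
              simp only [hit, if_false]
              simpa using Set.neg_mem_neg.mpr (hzeroK i ω)
        · have : ∑ i ∈ Finset.range t, (if i < t then -ξ i ω else 0)
              = ∑ i ∈ Finset.range (T + 1), (if i < t then -ξ i ω else 0) := by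
            apply Finset.sum_subset (Finset.range_subset_range.mpr (by omega))
            intro i hi hni
            simp only [Finset.mem_range] at hni
            simp [hni]
          rw [← this, Finset.sum_congr rfl (fun i hi => if_pos (Finset.mem_range.mp hi))]
          exact (Finset.sum_neg_distrib _).symm
      have hfmem : MemL0 μ (F t) (K t) f := by
        refine ⟨?_, ?_⟩
        · apply Measurable.neg
          apply Finset.measurable_sum
          intro i hi
          exact (hξ i (le_trans (le_of_lt (Finset.mem_range.mp hi)) ht)).1.mono
            (hFmono (le_of_lt (Finset.mem_range.mp hi))) le_rfl
        · filter_upwards [hfeq, (hξ t ht).2] with ω h1 h2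
          rw [h1]; exact h2
      have hf0 : f =ᵐ[μ] 0 := hA t ht f hfattain hfmem
      filter_upwards [hfeq, hf0] with ω h1 h2
      rw [← h1]; exact h2
    have key : ∀ k, ∀ i, i ≤ T → T ≤ i + k → ξ i =ᵐ[μ] 0 := by
      intro k
      induction k with
      | zero => intro i hi hTi; exact step i hi (fun j hj hjT => absurd (by omega : j ≤ i) (by omega))
      | succ k ih =>
        intro i hi hTi
        exact step i hi (fun j hj hjT => ih j hjT (by omega))
    intro i hi
    exact key T i hi (by omega)
  · intro hB t ht f hatt hfmem
    obtain ⟨η, hη, hf⟩ := hatt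
    set ζ : ℕ → Ω → ℝ × ℝ := fun i ω => if i = t then f ω - η t ω else -η i ω with hζdef
    have hζmem : ∀ i ≤ T, MemL0 μ (F i) (K i) (ζ i) := by
      intro i hiT
      by_cases hit : i = t
      · subst hit
        refine ⟨?_, ?_⟩
        · simp only [hζdef, if_pos rfl]
          exact hfmem.1.sub (hη i hiT).1
        · filter_upwards [hfmem.2, (hη i hiT).2] with ω h1 h2
          simp only [hζdef, if_pos rfl]
          rw [sub_eq_add_neg]
          exact hadd i ω (Set.add_mem_add h1 (by simpa using Set.neg_mem_neg.mpr h2))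
      · refine ⟨?_, ?_⟩
        · simp only [hζdef, if_neg hit]
          exact (hη i hiT).1.neg
        · filter_upwards [(hη i hiT).2] with ω h2
          simp only [hζdef, if_neg hit]
          simpa using Set.neg_mem_neg.mpr h2
    have hζsum : ∀ᵐ ω ∂μ, ∑ i ∈ Finset.range (T + 1), ζ i ω = 0 := by
      filter_upwards with ω
      have heq : ∀ i, ζ i ω = -η i ω + (if i = t then f ω else 0) := by
        intro i
        by_cases h : i = t
        · subst h
          simp only [hζdef, if_pos rfl, if_true]
          rw [sub_eq_add_neg, add_comm]
        · simp [hζdef, h]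
      simp only [heq]
      rw [Finset.sum_add_distrib, Finset.sum_ite_eq' (Finset.range (T+1)) t (fun _ => f ω),
        if_pos (Finset.mem_range.mpr (Nat.lt_succ_of_le ht)),
        Finset.sum_neg_distrib, ← hf ω, neg_add_cancel]
    have hζt0 : ζ t =ᵐ[μ] 0 := hB ζ hζmem hζsum t ht
    filter_upwards [hζt0, hfmem.2, (hη t ht).2] with ω h1 h2 h3
    simp only [hζdef, if_pos rfl, Pi.zero_apply] at h1
    have hfη : f ω = η t ω := sub_eq_zero.mp h1
    have : f ω ∈ K t ω ∩ -(K t ω) := ⟨h2, by rw [hfη]; exact h3⟩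
    rw [hproper t ω] at this
    exact this
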